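/- Let c0, k, Y > 0 and let f be a bounded measurable function on [0,∞). The function φ⁺(y) = 2 ∫₀^∞ exp(-(c0 ξ² + 2 k Y ξ)) ( ∫_ξ^{ξ+y} f(ζ) exp(-2 c0 ξ (ζ - ξ)) dζ ) dξ satisfies, for y > 0, the ODE -(1/2) φ⁺''(y) + (c0 y + k Y) φ⁺'(y) = f(y), with φ⁺(0) = 0 (assuming f is continuous so the ODE holds classically). -/

import Mathlib

open MeasureTheory Real Set

lemma aux_w_integrable (c0 b : ℝ) (hc0 : 0 < c0) :
    Integrable (fun ζ : ℝ => Real.exp (-(c0 * ζ ^ 2 + b * ζ))) := by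
  have h1 : Integrable (fun x : ℝ => Real.exp (-c0 * x ^ 2)) := integrable_exp_neg_mul_sq hc0
  have h2 := (h1.comp_add_right (b / (2 * c0))).const_mul (Real.exp (b ^ 2 / (4 * c0)))
  refine h2.congr (Filter.Eventually.of_forall fun x => ?_)
  simp only [← Real.exp_add]
  congr 1
  field_simp
  ring

lemma aux_h_integrable (c0 b M : ℝ) (hc0 : 0 < c0) (f : ℝ → ℝ) (hf : Continuous f)
    (hM : ∀ y, |f y| ≤ M) :
    Integrable (fun ζ : ℝ => Real.exp (-(c0 * ζ ^ 2 + b * ζ)) * f ζ) := by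
  refine ((aux_w_integrable c0 b hc0).const_mul M).mono'
    ((Real.continuous_exp.comp (by continuity)).mul hf).aestronglyMeasurable
    (Filter.Eventually.of_forall fun ζ => ?_)
  rw [Real.norm_eq_abs, abs_mul, abs_of_pos (Real.exp_pos _), mul_comm M]
  exact mul_le_mul_of_nonneg_left (hM ζ) (Real.exp_pos _).le

lemma aux_Ioi_split (h : ℝ → ℝ) (hi : Integrable h) (u : ℝ) :
    ∫ ζ in Ioi u, h ζ = (∫ ζ in Ioi (0:ℝ), h ζ) - ∫ ζ in (0:ℝ)..u, h ζ := by
  rcases le_or_gt 0 u with hu | hu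
  · rw [intervalIntegral.integral_of_le hu, eq_sub_iff_add_eq, add_comm,
      ← setIntegral_union (Ioc_disjoint_Ioi le_rfl) measurableSet_Ioi hi.integrableOn
        hi.integrableOn, Ioc_union_Ioi_eq_Ioi hu]
  · rw [intervalIntegral.integral_of_ge hu.le, sub_neg_eq_add, add_comm,
      ← setIntegral_union (Ioc_disjoint_Ioi le_rfl) measurableSet_Ioi hi.integrableOn
        hi.integrableOn, Ioc_union_Ioi_eq_Ioi hu.le]

lemma aux_translate (F : ℝ → ℝ) (u : ℝ) :
    ∫ ξ in Ioi (0:ℝ), F (ξ + u) = ∫ ζ in Ioi u, F ζ := by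
  have h1 := (measurableEmbedding_addRight u).setIntegral_map (μ := volume) F (Ioi u)
  rw [map_add_right_eq_self volume u] at h1
  rw [h1, show (fun x => x + u) ⁻¹' Ioi u = Ioi (0:ℝ) by rw [preimage_add_const_Ioi, sub_self]]

/-- the explicit double-integral formula
`φ⁺(y) = 2 ∫₀^∞ exp(-(c0 ξ² + 2 k Y ξ)) (∫_ξ^{ξ+y} f(ζ) exp(-2 c0 ξ (ζ - ξ)) dζ) dξ`
solves `-(1/2) φ⁺'' + (c0 y + k Y) φ⁺' = f` for `y > 0`, with `φ⁺(0) = 0`. -/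
theorem stmt0 (c0 k Y : ℝ) (hc0 : 0 < c0) (hk : 0 < k) (hY : 0 < Y)
    (f : ℝ → ℝ) (hf_cont : Continuous f) (hf_bdd : ∃ M, ∀ y, |f y| ≤ M)
    (φ : ℝ → ℝ)
    (hφ : ∀ y, φ y =
      2 * ∫ ξ in Ioi (0 : ℝ),
        Real.exp (-(c0 * ξ ^ 2 + 2 * k * Y * ξ)) *
          ∫ ζ in ξ..(ξ + y), f ζ * Real.exp (-2 * c0 * ξ * (ζ - ξ))) :
    (∀ y, 0 < y →
      -(1 / 2) * deriv (deriv φ) y + (c0 * y + k * Y) * deriv φ y = f y) ∧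
    φ 0 = 0 := by
  obtain ⟨M, hM⟩ := hf_bdd
  -- the density h and its primitive
  set h : ℝ → ℝ := fun ζ => Real.exp (-(c0 * ζ ^ 2 + 2 * k * Y * ζ)) * f ζ with hhdef
  have hh_cont : Continuous h := (Real.continuous_exp.comp (by fun_prop)).mul hf_cont
  have hh_int : Integrable h := aux_h_integrable c0 (2 * k * Y) M hc0 f hf_cont hM
  set C : ℝ := ∫ ζ in Ioi (0:ℝ), h ζ with hCdef
  set g₀ : ℝ → ℝ := fun u => Real.exp (c0 * u ^ 2 + 2 * k * Y * u) * ∫ ζ in Ioi u, h ζ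
    with hg₀def
  have g₀eq : ∀ u : ℝ, g₀ u
      = Real.exp (c0 * u ^ 2 + 2 * k * Y * u) * (C - ∫ t in (0:ℝ)..u, h t) := by
    intro u
    show Real.exp (c0 * u ^ 2 + 2 * k * Y * u) * (∫ ζ in Ioi u, h ζ) = _
    rw [aux_Ioi_split h hh_int u]
  have g₀eqF : g₀ = fun u =>
      Real.exp (c0 * u ^ 2 + 2 * k * Y * u) * (C - ∫ t in (0:ℝ)..u, h t) := funext g₀eq
  have hg₀cont : Continuous g₀ := by
    rw [g₀eqF]
    exact (Real.continuous_exp.comp (by fun_prop)).mul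
      (continuous_const.sub (intervalIntegral.continuous_primitive
        (fun a b => hh_cont.intervalIntegrable a b) 0))
  -- pointwise identity for the inner ξ-integral after swapping
  have step : ∀ u : ℝ,
      (∫ ξ in Ioi (0:ℝ), Real.exp (-(c0 * ξ ^ 2 + 2 * k * Y * ξ + 2 * c0 * ξ * u)) * f (u + ξ))
        = g₀ u := by
    intro u
    have h2 : ∀ ξ : ℝ, Real.exp (-(c0 * ξ ^ 2 + 2 * k * Y * ξ + 2 * c0 * ξ * u)) * f (u + ξ)
        = Real.exp (c0 * u ^ 2 + 2 * k * Y * u) *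
            (Real.exp (-(c0 * (ξ + u) ^ 2 + 2 * k * Y * (ξ + u))) * f (ξ + u)) := by
      intro ξ
      rw [add_comm u ξ, ← mul_assoc, ← Real.exp_add]
      congr 2
      ring
    simp_rw [h2]
    rw [aux_translate (fun ζ => Real.exp (c0 * u ^ 2 + 2 * k * Y * u) *
      (Real.exp (-(c0 * ζ ^ 2 + 2 * k * Y * ζ)) * f ζ)) u, MeasureTheory.integral_const_mul]
  -- the key representation of φ for positive y
  have key : ∀ y : ℝ, 0 < y → φ y = 2 * ∫ u in (0:ℝ)..y, g₀ u := by
    intro y hy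
    rw [hφ y]
    have stepA : ∀ ξ : ℝ,
        Real.exp (-(c0 * ξ ^ 2 + 2 * k * Y * ξ)) *
            (∫ ζ in ξ..(ξ + y), f ζ * Real.exp (-2 * c0 * ξ * (ζ - ξ)))
          = ∫ u in Ioc (0:ℝ) y,
              Real.exp (-(c0 * ξ ^ 2 + 2 * k * Y * ξ + 2 * c0 * ξ * u)) * f (u + ξ) := by
      intro ξ
      have t1 : (∫ ζ in ξ..(ξ + y), f ζ * Real.exp (-2 * c0 * ξ * (ζ - ξ)))
          = ∫ u in (0:ℝ)..y, f (u + ξ) * Real.exp (-2 * c0 * ξ * ((u + ξ) - ξ)) := by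
        rw [intervalIntegral.integral_comp_add_right
          (fun ζ => f ζ * Real.exp (-2 * c0 * ξ * (ζ - ξ))) ξ, zero_add, add_comm y ξ]
      rw [t1, intervalIntegral.integral_of_le hy.le, ← MeasureTheory.integral_const_mul]
      refine setIntegral_congr_fun measurableSet_Ioc fun u _ => ?_
      have e1 : -(c0 * ξ ^ 2 + 2 * k * Y * ξ + 2 * c0 * ξ * u)
          = (-(c0 * ξ ^ 2 + 2 * k * Y * ξ)) + (-2 * c0 * ξ * ((u + ξ) - ξ)) := by ring
      rw [e1, Real.exp_add]
      ring
    simp_rw [stepA]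
    have hFint : Integrable
        (Function.uncurry fun ξ u : ℝ =>
          Real.exp (-(c0 * ξ ^ 2 + 2 * k * Y * ξ + 2 * c0 * ξ * u)) * f (u + ξ))
        ((volume.restrict (Ioi (0:ℝ))).prod (volume.restrict (Ioc (0:ℝ) y))) := by
      have hdom : Integrable (fun p : ℝ × ℝ => (M * Real.exp (-c0 * p.1 ^ 2)) * (1:ℝ))
          ((volume.restrict (Ioi (0:ℝ))).prod (volume.restrict (Ioc (0:ℝ) y))) := by
        refine Integrable.mul_prod (f := fun x : ℝ => M * Real.exp (-c0 * x ^ 2))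
          (g := fun _ : ℝ => (1:ℝ)) ?_ ?_
        · exact ((integrable_exp_neg_mul_sq hc0).const_mul M).restrict
        · exact (integrableOn_const measure_Ioc_lt_top.ne)
      refine hdom.mono' ?_ ?_
      · exact ((Real.continuous_exp.comp (by fun_prop)).mul
          (hf_cont.comp (by fun_prop))).aestronglyMeasurable
      · rw [Measure.prod_restrict]
        refine (ae_restrict_iff' (measurableSet_Ioi.prod measurableSet_Ioc)).2
          (Filter.Eventually.of_forall ?_)
        rintro ⟨ξ, u⟩ ⟨hξ, hu⟩
        have hξ' : (0:ℝ) < ξ := hξ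
        have hu' : (0:ℝ) < u := hu.1
        have h1 : Real.exp (-(c0 * ξ ^ 2 + 2 * k * Y * ξ + 2 * c0 * ξ * u))
            ≤ Real.exp (-c0 * ξ ^ 2) := by
          apply Real.exp_le_exp.2
          nlinarith [mul_pos (mul_pos hk hY) hξ', mul_pos (mul_pos hc0 hξ') hu']
        show ‖Real.exp (-(c0 * ξ ^ 2 + 2 * k * Y * ξ + 2 * c0 * ξ * u)) * f (u + ξ)‖
          ≤ (M * Real.exp (-c0 * ξ ^ 2)) * 1
        rw [Real.norm_eq_abs, abs_mul, abs_of_pos (Real.exp_pos _), mul_one]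
        calc Real.exp (-(c0 * ξ ^ 2 + 2 * k * Y * ξ + 2 * c0 * ξ * u)) * |f (u + ξ)|
            ≤ Real.exp (-c0 * ξ ^ 2) * M :=
              mul_le_mul h1 (hM _) (abs_nonneg _) (Real.exp_pos _).le
          _ = M * Real.exp (-c0 * ξ ^ 2) := mul_comm _ _
    rw [MeasureTheory.integral_integral_swap hFint]
    simp_rw [step]
    rw [intervalIntegral.integral_of_le hy.le]
  -- derivative of g₀
  have hg₀ : ∀ z : ℝ, HasDerivAt g₀ ((2 * c0 * z + 2 * k * Y) * g₀ z - f z) z := by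
    intro z
    have hE : HasDerivAt (fun u : ℝ => c0 * u ^ 2 + 2 * k * Y * u)
        (2 * c0 * z + 2 * k * Y) z := by
      have h1 := ((hasDerivAt_pow 2 z).const_mul c0).add
        ((hasDerivAt_id z).const_mul (2 * k * Y))
      refine h1.congr_deriv ?_
      push_cast
      ring
    have hprim : HasDerivAt (fun u : ℝ => ∫ t in (0:ℝ)..u, h t) (h z) z :=
      (hh_cont.integral_hasStrictDerivAt 0 z).hasDerivAt
    have hsub := hprim.const_sub C
    have hclosed := hE.exp.mul hsub
    have hfz : Real.exp (c0 * z ^ 2 + 2 * k * Y * z) * h z = f z := by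
      show Real.exp (c0 * z ^ 2 + 2 * k * Y * z) *
        (Real.exp (-(c0 * z ^ 2 + 2 * k * Y * z)) * f z) = f z
      rw [← mul_assoc, ← Real.exp_add, add_neg_cancel, Real.exp_zero, one_mul]
    have hg : HasDerivAt g₀
        ((Real.exp (c0 * z ^ 2 + 2 * k * Y * z) * (2 * c0 * z + 2 * k * Y)) *
            (C - ∫ t in (0:ℝ)..z, h t)
          + Real.exp (c0 * z ^ 2 + 2 * k * Y * z) * -h z) z := by
      rw [g₀eqF]
      exact hclosed
    convert hg using 1
    rw [g₀eq z]
    linear_combination hfz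
  refine ⟨?_, ?_⟩
  · intro y hy
    have hd1 : ∀ t : ℝ, 0 < t → deriv φ t = 2 * g₀ t := by
      intro t ht
      have hev : φ =ᶠ[nhds t] fun s => 2 * ∫ u in (0:ℝ)..s, g₀ u := by
        filter_upwards [isOpen_Ioi.mem_nhds ht] with s hs using key s hs
      rw [hev.deriv_eq]
      exact (((hg₀cont.integral_hasStrictDerivAt 0 t).hasDerivAt).const_mul 2).deriv
    have hev2 : deriv φ =ᶠ[nhds y] fun t => 2 * g₀ t := by
      filter_upwards [isOpen_Ioi.mem_nhds hy] with t ht using hd1 t ht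
    rw [hev2.deriv_eq, hd1 y hy, ((hg₀ y).const_mul 2).deriv]
    ring
  · rw [hφ 0]
    simp
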